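/- Let Ξ = {ξ ∈ ℝ^{Nξ} : A ξ ≤ b} be a nonempty bounded polyhedron, let g : ℝ^{Nξ} → ℝ^{Ng} have components g_s(ξ) = max_{t=1..T} g_{st}ᵀ ξ, let c ∈ ℝ^{Ng}, and suppose there exists ξ̃ in the interior of Ξ with g(ξ̃) < c componentwise. Let f : Ξ → ℝ be continuous. Then the moment problem sup{∫ f(ξ) μ(dξ) : μ a nonnegative Borel measure supported on Ξ, ∫ μ(dξ) = 1, ∫ g(ξ) μ(dξ) ≤ c componentwise} has the same optimal value as the dual semi-infinite program inf{φ + cᵀψ : φ ∈ ℝ, ψ ∈ ℝ^{Ng} with ψ ≥ 0, and φ + ψᵀ g(ξ) ≥ f(ξ) for all ξ ∈ Ξ}, and the dual infimum is attained by some finite (φ*, ψ*) with ψ* ≥ 0. -/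

import Mathlib

open MeasureTheory Matrix

private lemma integral_sum_dirac {α : Type*} [MeasurableSpace α] [MeasurableSingletonClass α]
    {ι : Type} (t : Finset ι) (w : ι → ℝ) (hw : ∀ i ∈ t, 0 ≤ w i) (a : ι → α) (h : α → ℝ) :
    ∫ x, h x ∂(∑ i ∈ t, (ENNReal.ofReal (w i)) • Measure.dirac (a i))
      = ∑ i ∈ t, w i * h (a i) := by
  rw [integral_finset_sum_measure ?_]
  · refine Finset.sum_congr rfl fun i hi => ?_
    rw [integral_smul_measure, integral_dirac, smul_eq_mul,
      ENNReal.toReal_ofReal (hw i hi)]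
  · intro i hi
    rcases eq_or_ne (ENNReal.ofReal (w i)) 0 with h0 | h0
    · rw [h0, zero_smul]; exact integrable_zero_measure
    · rw [integrable_smul_measure h0 ENNReal.ofReal_ne_top]
      exact (integrable_const (h (a i))).congr (ae_eq_dirac h).symm

private lemma combo_lt {u v u' v' a b : ℝ} (hu : u < v) (hu' : u' < v') (ha : 0 ≤ a) (hb : 0 ≤ b)
    (hab : a + b = 1) : a * u + b * u' < a * v + b * v' := by
  rcases eq_or_lt_of_le ha with rfl | ha'
  · have hb1 : b = 1 := by linarith
    simpa [hb1] using hu'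
  · have h1 : a * u < a * v := (mul_lt_mul_iff_right₀ ha').2 hu
    have h2 : b * u' ≤ b * v' := mul_le_mul_of_nonneg_left hu'.le hb
    linarith

set_option maxHeartbeats 1000000 in
/-- strong duality and dual attainment for the moment problem over the ambiguity
set `{μ : μ probability measure supported on Ξ, ∫ g dμ ≤ c}` against the semi-infinite dual
`inf{φ + cᵀψ : ψ ≥ 0, φ + ψᵀg(ξ) ≥ f(ξ) ∀ ξ ∈ Ξ}`. -/
theorem stmt1 (Nξ Ng T R : ℕ) (hT : 0 < T)
    (A : Matrix (Fin R) (Fin Nξ) ℝ) (b : Fin R → ℝ)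
    (Ξ : Set (Fin Nξ → ℝ)) (hΞ : Ξ = {ξ | A.mulVec ξ ≤ b})
    (hΞne : Ξ.Nonempty) (hΞbdd : Bornology.IsBounded Ξ)
    (gst : Fin Ng → Fin T → (Fin Nξ → ℝ))
    (g : (Fin Nξ → ℝ) → Fin Ng → ℝ)
    (hg : ∀ ξ s, g ξ s = ⨆ t : Fin T, gst s t ⬝ᵥ ξ)
    (c : Fin Ng → ℝ)
    (hslater : ∃ ξt ∈ interior Ξ, ∀ s, g ξt s < c s)
    (f : (Fin Nξ → ℝ) → ℝ) (hf : ContinuousOn f Ξ)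
    (primal dual : Set EReal)
    (hprimal : primal = {v : EReal |
      ∃ μ : Measure (Fin Nξ → ℝ), IsProbabilityMeasure μ ∧ μ Ξᶜ = 0 ∧
        (∀ s, (∫ ξ, g ξ s ∂μ) ≤ c s) ∧ v = ((∫ ξ, f ξ ∂μ : ℝ) : EReal)})
    (hdual : dual = {v : EReal |
      ∃ (φ : ℝ) (ψ : Fin Ng → ℝ), 0 ≤ ψ ∧
        (∀ ξ ∈ Ξ, f ξ ≤ φ + ψ ⬝ᵥ g ξ) ∧
        v = ((φ + c ⬝ᵥ ψ : ℝ) : EReal)}) :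
    sSup primal = sInf dual ∧
    ∃ (φ : ℝ) (ψ : Fin Ng → ℝ), 0 ≤ ψ ∧
      (∀ ξ ∈ Ξ, f ξ ≤ φ + ψ ⬝ᵥ g ξ) ∧
      ((φ + c ⬝ᵥ ψ : ℝ) : EReal) = sInf dual := by
  subst hprimal hdual
  haveI : Nonempty (Fin T) := ⟨⟨0, hT⟩⟩
  obtain ⟨ξt, hξtint, hξtlt⟩ := hslater
  have hξtΞ : ξt ∈ Ξ := interior_subset hξtint
  -- continuity of g
  have hgc : Continuous g := by
    have hrw : g = fun ξ s => Finset.univ.sup' Finset.univ_nonempty (fun t => gst s t ⬝ᵥ ξ) := by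
      funext ξ s; rw [hg, ← Finset.sup'_univ_eq_ciSup]
    rw [hrw]
    refine continuous_pi fun s => Continuous.finset_sup'_apply Finset.univ_nonempty fun t _ => ?_
    exact continuous_const.dotProduct continuous_id
  -- compactness of Ξ
  have hΞclosed : IsClosed Ξ := by
    rw [hΞ]
    have : {ξ : Fin Nξ → ℝ | A.mulVec ξ ≤ b} = ⋂ i, {ξ | A.mulVec ξ i ≤ b i} := by
      ext ξ; simp [Pi.le_def, Set.mem_iInter]
    rw [this]
    refine isClosed_iInter fun i => isClosed_le ?_ continuous_const
    exact (continuous_apply i).comp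
      (Continuous.matrix_mulVec (A := fun _ => A) continuous_const continuous_id)
  have hΞcomp : IsCompact Ξ := Metric.isCompact_of_isClosed_isBounded hΞclosed hΞbdd
  -- basic objects
  set Φ : (Fin Nξ → ℝ) → (Fin Ng → ℝ) × ℝ := fun ξ => (g ξ, f ξ) with hΦdef
  set S : Set ((Fin Ng → ℝ) × ℝ) := Φ '' Ξ with hSdef
  set K : Set ((Fin Ng → ℝ) × ℝ) := closure (convexHull ℝ S) with hKdef
  have hΦcont : ContinuousOn Φ Ξ := (hgc.continuousOn).prodMk hf
  have hKconv : Convex ℝ K := (convex_convexHull ℝ S).closure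
  have hKclosed : IsClosed K := isClosed_closure
  have hSsubK : S ⊆ K := fun p hp => subset_closure (subset_convexHull ℝ S hp)
  have hKbdd : Bornology.IsBounded K :=
    (isBounded_convexHull.mpr (hΞcomp.image_of_continuousOn hΦcont).isBounded).closure
  set Y : Set ℝ := {y : ℝ | ∃ x, (x, y) ∈ K ∧ x ≤ c} with hYdef
  have hqtK : Φ ξt ∈ K := hSsubK (Set.mem_image_of_mem _ hξtΞ)
  have hslc : g ξt ≤ c := fun s => (hξtlt s).le
  have hYne : f ξt ∈ Y := ⟨g ξt, hqtK, hslc⟩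
  have hYbdd : BddAbove Y := by
    obtain ⟨r, hr⟩ := hKbdd.subset_closedBall 0
    refine ⟨r, ?_⟩
    rintro y ⟨x, hxK, -⟩
    have h1 : ‖((x, y) : (Fin Ng → ℝ) × ℝ)‖ ≤ r := by
      simpa [Metric.mem_closedBall, dist_eq_norm] using hr hxK
    calc y ≤ |y| := le_abs_self y
      _ = ‖y‖ := (Real.norm_eq_abs y).symm
      _ ≤ ‖((x, y) : (Fin Ng → ℝ) × ℝ)‖ := norm_snd_le ((x, y) : (Fin Ng → ℝ) × ℝ)
      _ ≤ r := h1
  set P : ℝ := sSup Y with hPdef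
  -- every primal value lies in Y
  have hprimY : ∀ v ∈ {v : EReal |
      ∃ μ : Measure (Fin Nξ → ℝ), IsProbabilityMeasure μ ∧ μ Ξᶜ = 0 ∧
        (∀ s, (∫ ξ, g ξ s ∂μ) ≤ c s) ∧ v = ((∫ ξ, f ξ ∂μ : ℝ) : EReal)},
      ∃ y ∈ Y, v = ((y : ℝ) : EReal) := by
    rintro v ⟨μ, hμp, hμn, hμm, rfl⟩
    haveI := hμp
    have haemem : ∀ᵐ ξ ∂μ, ξ ∈ Ξ := by rw [MeasureTheory.ae_iff]; exact hμn
    have hres : μ.restrict Ξ = μ := Measure.restrict_eq_self_of_ae_mem haemem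
    have hΦint : Integrable Φ μ := by
      rw [← hres]; exact ContinuousOn.integrableOn_compact hΞcomp hΦcont
    have hmem : (∫ ξ, Φ ξ ∂μ) ∈ K := by
      refine hKconv.integral_mem hKclosed ?_ hΦint
      filter_upwards [haemem] with ξ hξ
      exact hSsubK (Set.mem_image_of_mem _ hξ)
    have h2 : (∫ ξ, Φ ξ ∂μ).2 = ∫ ξ, f ξ ∂μ := by
      have := ContinuousLinearMap.integral_comp_comm
        (ContinuousLinearMap.snd ℝ (Fin Ng → ℝ) ℝ) hΦint
      simpa using this.symm
    have h1 : (∫ ξ, Φ ξ ∂μ).1 = fun s => ∫ ξ, g ξ s ∂μ := by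
      funext s
      have := ContinuousLinearMap.integral_comp_comm
        ((ContinuousLinearMap.proj s).comp (ContinuousLinearMap.fst ℝ (Fin Ng → ℝ) ℝ)) hΦint
      simpa using this.symm
    refine ⟨∫ ξ, f ξ ∂μ, ⟨fun s => ∫ ξ, g ξ s ∂μ, ?_, fun s => hμm s⟩, rfl⟩
    have : (∫ ξ, Φ ξ ∂μ) = ((fun s => ∫ ξ, g ξ s ∂μ), ∫ ξ, f ξ ∂μ) := by
      rw [← h1, ← h2]
    rwa [← this]
  -- discrete measures realize points of the convex hull as primal values
  have hdisc : ∀ x' y', (x', y') ∈ convexHull ℝ S → x' ≤ c →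
      ((y' : ℝ) : EReal) ∈ {v : EReal |
      ∃ μ : Measure (Fin Nξ → ℝ), IsProbabilityMeasure μ ∧ μ Ξᶜ = 0 ∧
        (∀ s, (∫ ξ, g ξ s ∂μ) ≤ c s) ∧ v = ((∫ ξ, f ξ ∂μ : ℝ) : EReal)} := by
    intro x' y' hmem hxc
    rw [convexHull_eq] at hmem
    obtain ⟨ι, t, w, z, hw0, hw1, hzS, hcm⟩ := hmem
    have hz' : ∀ i ∈ t, ∃ a, a ∈ Ξ ∧ Φ a = z i := by
      intro i hi
      obtain ⟨a, ha, hae⟩ := hzS i hi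
      exact ⟨a, ha, hae⟩
    choose! ξof hξofΞ hξofΦ using hz'
    rw [Finset.centerMass_eq_of_sum_1 _ _ hw1] at hcm
    have hx' : ∀ s, ∑ i ∈ t, w i * (z i).1 s = x' s := by
      intro s
      have := congrArg (fun p : (Fin Ng → ℝ) × ℝ => p.1 s) hcm
      simpa [Prod.fst_sum, Finset.sum_apply] using this
    have hy' : ∑ i ∈ t, w i * (z i).2 = y' := by
      have := congrArg (fun p : (Fin Ng → ℝ) × ℝ => p.2) hcm
      simpa [Prod.snd_sum] using this
    refine ⟨∑ i ∈ t, ENNReal.ofReal (w i) • Measure.dirac (ξof i), ?_, ?_, ?_, ?_⟩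
    · constructor
      rw [Measure.finset_sum_apply]
      simp only [Measure.smul_apply, measure_univ, smul_eq_mul, mul_one]
      rw [← ENNReal.ofReal_sum_of_nonneg hw0, hw1, ENNReal.ofReal_one]
    · rw [Measure.finset_sum_apply]
      refine Finset.sum_eq_zero fun i hi => ?_
      have : Measure.dirac (ξof i) Ξᶜ = 0 := by
        rw [Measure.dirac_apply]
        simp [Set.indicator_of_notMem, hξofΞ i hi]
      simp [Measure.smul_apply, this]
    · intro s
      rw [integral_sum_dirac t w hw0 ξof (fun ξ => g ξ s)]
      have : ∑ i ∈ t, w i * g (ξof i) s = ∑ i ∈ t, w i * (z i).1 s := by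
        refine Finset.sum_congr rfl fun i hi => ?_
        rw [show g (ξof i) = (z i).1 from congrArg Prod.fst (hξofΦ i hi)]
      rw [this, hx' s]
      exact hxc s
    · rw [integral_sum_dirac t w hw0 ξof f]
      have : ∑ i ∈ t, w i * f (ξof i) = ∑ i ∈ t, w i * (z i).2 := by
        refine Finset.sum_congr rfl fun i hi => ?_
        rw [show f (ξof i) = (z i).2 from congrArg Prod.snd (hξofΦ i hi)]
      rw [this, hy']
  -- approximation: near-optimal points of the (non-closed) convex hull
  have hper : ∀ ε > (0 : ℝ), ∃ x' y', (x', y') ∈ convexHull ℝ S ∧ x' ≤ c ∧ P - ε ≤ y' := by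
    intro ε hε
    obtain ⟨y, hyY, hy⟩ := exists_lt_of_lt_csSup ⟨f ξt, hYne⟩
      (show P - ε / 4 < P by linarith)
    obtain ⟨x, hxK, hxc⟩ := hyY
    set d : ℝ := |f ξt - y| with hddef
    have hd0 : 0 ≤ d := abs_nonneg _
    set θ : ℝ := min (1 / 2 : ℝ) (ε / (4 * (d + 1))) with hθdef
    have hθpos : 0 < θ := lt_min (by norm_num) (by positivity)
    have hθhalf : θ ≤ 1 / 2 := min_le_left _ _
    have hθd : θ * d ≤ ε / 4 := by
      have h1 : θ * (d + 1) ≤ (ε / (4 * (d + 1))) * (d + 1) :=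
        mul_le_mul_of_nonneg_right (min_le_right _ _) (by linarith)
      have h2 : (ε / (4 * (d + 1))) * (d + 1) = ε / 4 := by
        field_simp
      nlinarith
    set p : (Fin Ng → ℝ) × ℝ := (1 - θ) • ((x, y) : (Fin Ng → ℝ) × ℝ) + θ • Φ ξt with hpdef
    have hpK : p ∈ K := hKconv hxK hqtK (by linarith) hθpos.le (by ring)
    have hp1 : ∀ s, p.1 s < c s := by
      intro s
      have e : p.1 s = (1 - θ) * x s + θ * g ξt s := by
        simp [hpdef, Prod.fst_add, Pi.add_apply, Pi.smul_apply, smul_eq_mul, hΦdef]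
      have h1 : (1 - θ) * x s ≤ (1 - θ) * c s :=
        mul_le_mul_of_nonneg_left (hxc s) (by linarith)
      have h2 : θ * g ξt s < θ * c s := (mul_lt_mul_iff_right₀ hθpos).2 (hξtlt s)
      rw [e]; nlinarith
    have hp2 : y - ε / 4 ≤ p.2 := by
      have e : p.2 = (1 - θ) * y + θ * f ξt := by
        simp [hpdef, smul_eq_mul, hΦdef]
      have h1 : θ * (-(d)) ≤ θ * (f ξt - y) :=
        mul_le_mul_of_nonneg_left (neg_abs_le _) hθpos.le
      rw [e]; nlinarith
    set U : Set ((Fin Ng → ℝ) × ℝ) := {q | (∀ s, q.1 s < c s) ∧ p.2 - ε / 4 < q.2} with hUdef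
    have hUopen : IsOpen U := by
      have hc1 : ∀ s : Fin Ng, Continuous fun q : (Fin Ng → ℝ) × ℝ => q.1 s :=
        fun s => (continuous_apply s).comp continuous_fst
      have : U = (⋂ s, {q : (Fin Ng → ℝ) × ℝ | q.1 s < c s}) ∩
          {q : (Fin Ng → ℝ) × ℝ | p.2 - ε / 4 < q.2} := by
        ext q
        constructor
        · rintro ⟨h1, h2⟩
          exact ⟨Set.mem_iInter.2 h1, h2⟩
        · rintro ⟨h1, h2⟩
          exact ⟨Set.mem_iInter.1 h1, h2⟩
      rw [this]
      exact (isOpen_iInter_of_finite fun s =>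
        isOpen_lt (hc1 s) continuous_const).inter
        (isOpen_lt continuous_const continuous_snd)
    have hpU : p ∈ U := ⟨hp1, by linarith⟩
    obtain ⟨q, hqU, hqconv⟩ := mem_closure_iff.1 hpK U hUopen hpU
    obtain ⟨hq1, hq2⟩ := hqU
    refine ⟨q.1, q.2, by simpa using hqconv, fun s => (hq1 s).le, ?_⟩
    linarith
  -- SEPARATION
  set Bo : Set ((Fin Ng → ℝ) × ℝ) :=
    {p | ∃ q ∈ K, (∀ s, q.1 s - c s < p.1 s) ∧ p.2 < q.2} with hBodef
  have hBoOpen : IsOpen Bo := by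
    have hc1 : ∀ s : Fin Ng, Continuous fun p : (Fin Ng → ℝ) × ℝ => p.1 s :=
      fun s => (continuous_apply s).comp continuous_fst
    have : Bo = ⋃ q ∈ K, ((⋂ s, {p : (Fin Ng → ℝ) × ℝ | q.1 s - c s < p.1 s}) ∩
        {p : (Fin Ng → ℝ) × ℝ | p.2 < q.2}) := by
      ext p
      constructor
      · rintro ⟨q, hq, h1, h2⟩
        exact Set.mem_biUnion hq ⟨Set.mem_iInter.2 h1, h2⟩
      · intro hp
        obtain ⟨q, hq, hmem⟩ := Set.mem_iUnion₂.1 hp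
        exact ⟨q, hq, Set.mem_iInter.1 hmem.1, hmem.2⟩
    rw [this]
    refine isOpen_biUnion fun q _ => ?_
    exact (isOpen_iInter_of_finite fun s =>
      isOpen_lt continuous_const (hc1 s)).inter
      (isOpen_lt continuous_snd continuous_const)
  have hBoConv : Convex ℝ Bo := by
    rintro p ⟨q, hqK, hq1, hq2⟩ p' ⟨q', hq'K, hq'1, hq'2⟩ a b' ha hb hab
    refine ⟨a • q + b' • q', hKconv hqK hq'K ha hb hab, fun s => ?_, ?_⟩
    · have e := combo_lt (hq1 s) (hq'1 s) ha hb hab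
      have l1 : (a • q + b' • q').1 s = a * q.1 s + b' * q'.1 s := by simp [smul_eq_mul]
      have l2 : (a • p + b' • p').1 s = a * p.1 s + b' * p'.1 s := by simp [smul_eq_mul]
      rw [l1, l2]
      have l3 : a * (q.1 s - c s) + b' * (q'.1 s - c s) = a * q.1 s + b' * q'.1 s - c s := by
        linear_combination (-(c s)) * hab
      linarith
    · have := combo_lt hq2 hq'2 ha hb hab
      have e1 : (a • p + b' • p').2 = a * p.2 + b' * p'.2 := by simp [smul_eq_mul]
      have e2 : (a • q + b' • q').2 = a * q.2 + b' * q'.2 := by simp [smul_eq_mul]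
      rw [e1, e2]; exact this
  set Tray : Set ((Fin Ng → ℝ) × ℝ) := {p | p.1 = 0 ∧ P < p.2} with hTraydef
  have hTrayConv : Convex ℝ Tray := by
    rintro p ⟨hp1, hp2⟩ p' ⟨hp'1, hp'2⟩ a b' ha hb hab
    constructor
    · simp [Prod.fst_add, hp1, hp'1]
    · have := combo_lt hp2 hp'2 ha hb hab
      have e : (a • p + b' • p').2 = a * p.2 + b' * p'.2 := by simp [smul_eq_mul]
      have hP1 : a * P + b' * P = P := by linear_combination P * hab
      rw [e]; linarith
  have hdisj : Disjoint Bo Tray := by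
    rw [Set.disjoint_left]
    rintro p ⟨q, hqK, hq1, hq2⟩ ⟨hp1, hp2⟩
    have hqc : q.1 ≤ c := by
      intro s
      have := hq1 s
      rw [hp1] at this
      simpa using this.le
    have hqY : q.2 ∈ Y := ⟨q.1, by rwa [Prod.mk.eta], hqc⟩
    have := le_csSup hYbdd hqY
    linarith
  obtain ⟨L, u0, hL1, hL2⟩ := geometric_hahn_banach_open hBoConv hBoOpen hTrayConv hdisj
  set β : ℝ := L (0, 1) with hβdef
  set ψ' : Fin Ng → ℝ := fun s => L (Pi.single s 1, 0) with hψ'def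
  have hLrep : ∀ (u : Fin Ng → ℝ) (r : ℝ), L (u, r) = (∑ s, u s * ψ' s) + r * β := by
    intro u r
    have h1 : ((u, r) : (Fin Ng → ℝ) × ℝ)
        = (∑ s, u s • ((Pi.single s 1 : Fin Ng → ℝ), (0 : ℝ))) + r • ((0 : Fin Ng → ℝ), (1 : ℝ)) := by
      refine Prod.ext ?_ ?_
      · simp only [Prod.fst_add, Prod.fst_sum, Prod.smul_fst, Prod.smul_snd]
        have : ∀ s : Fin Ng, u s • (Pi.single s 1 : Fin Ng → ℝ) = Pi.single s (u s) := by
          intro s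
          rw [← Pi.single_smul, smul_eq_mul, mul_one]
        simp only [this]
        rw [Finset.univ_sum_single]
        simp
      · simp [Prod.snd_sum]
    rw [h1, map_add, _root_.map_sum, _root_.map_smul, smul_eq_mul]
    congr 1
    refine Finset.sum_congr rfl fun s _ => ?_
    rw [_root_.map_smul, smul_eq_mul]
  have hBomem : ∀ (p q : (Fin Ng → ℝ) × ℝ), q ∈ K → (∀ s, q.1 s - c s < p.1 s) → p.2 < q.2 →
      L p < u0 := fun p q hq h1 h2 => hL1 p ⟨q, hq, h1, h2⟩
  have hβ0 : 0 ≤ β := by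
    by_contra hneg
    push_neg at hneg
    set C : ℝ := ∑ s, (g ξt s - c s + 1) * ψ' s with hCdef
    set yy : ℝ := min ((u0 - C) / β) (f ξt - 1) with hyydef
    have hmem : L ((fun s => g ξt s - c s + 1), yy) < u0 := by
      refine hBomem _ (Φ ξt) hqtK (fun s => by simp [hΦdef]) ?_
      calc yy ≤ f ξt - 1 := min_le_right _ _
        _ < f ξt := by linarith
    rw [hLrep] at hmem
    have h1 : yy ≤ (u0 - C) / β := min_le_left _ _
    have h2 : ((u0 - C) / β) * β ≤ yy * β := mul_le_mul_of_nonpos_right h1 hneg.le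
    rw [div_mul_cancel₀ _ hneg.ne] at h2
    simp only [← hCdef] at hmem
    linarith
  have hβne : β ≠ 0 := by
    intro h0
    have hmem : L ((0 : Fin Ng → ℝ), f ξt - 1) < u0 := by
      refine hBomem _ (Φ ξt) hqtK (fun s => by simpa using hξtlt s) (by simp [hΦdef])
    have hmem2 : u0 ≤ L ((0 : Fin Ng → ℝ), P + 1) := hL2 _ ⟨rfl, by simp⟩
    rw [hLrep] at hmem hmem2
    simp only [h0] at hmem hmem2
    simp at hmem hmem2
    linarith
  have hβ : 0 < β := hβ0.lt_of_ne (Ne.symm hβne)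
  have hψ'le : ∀ s, ψ' s ≤ 0 := by
    intro s
    by_contra h
    push_neg at h
    set base : (Fin Ng → ℝ) × ℝ := ((fun s' => g ξt s' - c s' + 1), f ξt - 1) with hbasedef
    set D : ℝ := L base with hDdef
    have key : ∀ M > (0 : ℝ), D + M * ψ' s < u0 := by
      intro M hM
      have hsingle : ∀ s' : Fin Ng, (0 : ℝ) ≤ (Pi.single s (1 : ℝ) : Fin Ng → ℝ) s' := by
        intro s'
        rcases eq_or_ne s' s with rfl | hne
        · simp
        · simp [Pi.single_eq_of_ne hne]
      have hm : L (base + M • ((Pi.single s 1 : Fin Ng → ℝ), (0 : ℝ))) < u0 := by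
        refine hBomem _ (Φ ξt) hqtK (fun s' => ?_) ?_
        · have : (0 : ℝ) ≤ M * (Pi.single s (1 : ℝ) : Fin Ng → ℝ) s' :=
            mul_nonneg hM.le (hsingle s')
          simp only [Prod.fst_add, Pi.add_apply, Prod.smul_fst, Pi.smul_apply, smul_eq_mul,
            hbasedef]
          simp
          linarith
        · simp [hbasedef, hΦdef]
      rw [map_add, _root_.map_smul, smul_eq_mul] at hm
      exact hm
    set M : ℝ := max 1 ((u0 - D) / ψ' s + 1) with hMdef
    have hM0 : 0 < M := lt_of_lt_of_le one_pos (le_max_left _ _)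
    have h1 : ((u0 - D) / ψ' s + 1) * ψ' s ≤ M * ψ' s :=
      mul_le_mul_of_nonneg_right (le_max_right _ _) h.le
    have h2 : ((u0 - D) / ψ' s + 1) * ψ' s = u0 - D + ψ' s := by
      field_simp
    have := key M hM0
    nlinarith
  have hu0 : u0 ≤ P * β := by
    refine le_of_forall_pos_le_add fun δ hδ => ?_
    have hε' : 0 < δ / β := by positivity
    have h1 : u0 ≤ L ((0 : Fin Ng → ℝ), P + δ / β) := hL2 _ ⟨rfl, by simp; positivity⟩
    rw [hLrep] at h1
    simp only [Pi.zero_apply, zero_mul, Finset.sum_const_zero, zero_add] at h1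
    have h2 : (P + δ / β) * β = P * β + δ := by
      field_simp
    linarith [h1, h2.symm ▸ h1]
  have hKineq : ∀ q ∈ K, (∑ s, (q.1 s - c s) * ψ' s) + q.2 * β ≤ P * β := by
    intro q hq
    have hsum_nonpos : ∑ s, ψ' s ≤ 0 := Finset.sum_nonpos fun s _ => hψ'le s
    have hpos : 0 < β - ∑ s, ψ' s := by linarith
    refine le_of_forall_pos_le_add fun δ hδ => ?_
    set ε : ℝ := δ / (β - ∑ s, ψ' s) with hεdef
    have hεpos : 0 < ε := by positivity
    have hm : L ((fun s => q.1 s - c s + ε), q.2 - ε) < u0 := by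
      refine hBomem _ q hq (fun s => by simp; linarith) (by simp; linarith)
    rw [hLrep] at hm
    have hexp : ∑ s, (q.1 s - c s + ε) * ψ' s
        = (∑ s, (q.1 s - c s) * ψ' s) + ε * ∑ s, ψ' s := by
      rw [Finset.mul_sum, ← Finset.sum_add_distrib]
      exact Finset.sum_congr rfl fun s _ => by ring
    rw [hexp] at hm
    have hcancel : ε * (β - ∑ s, ψ' s) = δ := div_mul_cancel₀ _ hpos.ne'
    nlinarith [hm, hu0]
  -- the dual optimizer
  set ψ : Fin Ng → ℝ := fun s => -ψ' s / β with hψdef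
  have hψ0 : (0 : Fin Ng → ℝ) ≤ ψ := fun s => div_nonneg (neg_nonneg.2 (hψ'le s)) hβ.le
  set φ : ℝ := P - c ⬝ᵥ ψ with hφdef
  have hψβ : ∀ s, ψ s * β = -ψ' s := fun s => div_mul_cancel₀ _ hβ.ne'
  have hvalreal : φ + c ⬝ᵥ ψ = P := by rw [hφdef]; ring
  have hfeas : ∀ ξ ∈ Ξ, f ξ ≤ φ + ψ ⬝ᵥ g ξ := by
    intro ξ hξ
    have hqK : Φ ξ ∈ K := hSsubK (Set.mem_image_of_mem _ hξ)
    have h := hKineq _ hqK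
    simp only [hΦdef] at h
    have hcψ : c ⬝ᵥ ψ = ∑ s, c s * ψ s := rfl
    have hψg : ψ ⬝ᵥ g ξ = ∑ s, ψ s * g ξ s := rfl
    rw [hφdef, hcψ, hψg]
    rw [← mul_le_mul_iff_left₀ hβ]
    have e1 : ∑ s, c s * ψ s * β = -∑ s, c s * ψ' s := by
      rw [← Finset.sum_neg_distrib]
      refine Finset.sum_congr rfl fun s _ => ?_
      rw [mul_assoc, hψβ s]; ring
    have e2 : ∑ s, ψ s * g ξ s * β = -∑ s, g ξ s * ψ' s := by
      rw [← Finset.sum_neg_distrib]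
      refine Finset.sum_congr rfl fun s _ => ?_
      have : ψ s * g ξ s * β = g ξ s * (ψ s * β) := by ring
      rw [this, hψβ s]; ring
    have e3 : ∑ s, (g ξ s - c s) * ψ' s = ∑ s, g ξ s * ψ' s - ∑ s, c s * ψ' s := by
      rw [← Finset.sum_sub_distrib]
      exact Finset.sum_congr rfl fun s _ => by ring
    have expand : (P - ∑ s, c s * ψ s + ∑ s, ψ s * g ξ s) * β
        = P * β - ∑ s, c s * ψ s * β + ∑ s, ψ s * g ξ s * β := by
      rw [← Finset.sum_mul, ← Finset.sum_mul]; ring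
    rw [expand, e1, e2]
    rw [e3] at h
    linarith
  -- weak duality
  have hweak : ∀ (φ₁ : ℝ) (ψ₁ : Fin Ng → ℝ), 0 ≤ ψ₁ → (∀ ξ ∈ Ξ, f ξ ≤ φ₁ + ψ₁ ⬝ᵥ g ξ) →
      P ≤ φ₁ + c ⬝ᵥ ψ₁ := by
    intro φ₁ ψ₁ h0 hfe
    refine csSup_le ⟨f ξt, hYne⟩ ?_
    rintro y ⟨x, hxK, hxc⟩
    set C : Set ((Fin Ng → ℝ) × ℝ) := {p | p.2 ≤ φ₁ + ∑ s, ψ₁ s * p.1 s} with hCdef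
    have hCclosed : IsClosed C := isClosed_le continuous_snd
      (continuous_const.add (continuous_finset_sum _ fun s _ =>
        continuous_const.mul ((continuous_apply s).comp continuous_fst)))
    have hCconv : Convex ℝ C := by
      rintro p hp q hq a b' ha hb hab
      have h1 : p.2 ≤ φ₁ + ∑ s, ψ₁ s * p.1 s := hp
      have h2 : q.2 ≤ φ₁ + ∑ s, ψ₁ s * q.1 s := hq
      show (a • p + b' • q).2 ≤ φ₁ + ∑ s, ψ₁ s * (a • p + b' • q).1 s
      have e0 : (a • p + b' • q).2 = a * p.2 + b' * q.2 := by simp [smul_eq_mul]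
      have e1 : ∀ s, (a • p + b' • q).1 s = a * p.1 s + b' * q.1 s := by
        intro s; simp [smul_eq_mul]
      have e2 : ∑ s, ψ₁ s * (a * p.1 s + b' * q.1 s)
          = a * (∑ s, ψ₁ s * p.1 s) + b' * (∑ s, ψ₁ s * q.1 s) := by
        rw [Finset.mul_sum, Finset.mul_sum, ← Finset.sum_add_distrib]
        exact Finset.sum_congr rfl fun s _ => by ring
      simp only [e0, e1, e2]
      have ha1 : a * p.2 ≤ a * (φ₁ + ∑ s, ψ₁ s * p.1 s) := mul_le_mul_of_nonneg_left h1 ha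
      have hb1 : b' * q.2 ≤ b' * (φ₁ + ∑ s, ψ₁ s * q.1 s) := mul_le_mul_of_nonneg_left h2 hb
      have hφ1 : a * φ₁ + b' * φ₁ = φ₁ := by linear_combination φ₁ * hab
      linarith
    have hSC : S ⊆ C := by
      rintro _ ⟨ξ, hξ, rfl⟩
      exact hfe ξ hξ
    have hKC : K ⊆ C := closure_minimal (convexHull_min hSC hCconv) hCclosed
    have hy : y ≤ φ₁ + ∑ s, ψ₁ s * x s := hKC hxK
    have hmono : ∑ s, ψ₁ s * x s ≤ ∑ s, ψ₁ s * c s :=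
      Finset.sum_le_sum fun s _ => mul_le_mul_of_nonneg_left (hxc s) (h0 s)
    have hcomm : (c ⬝ᵥ ψ₁ : ℝ) = ∑ s, ψ₁ s * c s := by
      show (∑ s, c s * ψ₁ s) = _
      exact Finset.sum_congr rfl fun s _ => mul_comm _ _
    rw [hcomm]
    linarith
  -- dual infimum value
  have hsInf : sInf {v : EReal |
      ∃ (φ₁ : ℝ) (ψ₁ : Fin Ng → ℝ), 0 ≤ ψ₁ ∧
        (∀ ξ ∈ Ξ, f ξ ≤ φ₁ + ψ₁ ⬝ᵥ g ξ) ∧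
        v = ((φ₁ + c ⬝ᵥ ψ₁ : ℝ) : EReal)} = (P : EReal) := by
    apply le_antisymm
    · refine sInf_le ⟨φ, ψ, hψ0, hfeas, ?_⟩
      exact_mod_cast hvalreal.symm
    · refine le_sInf ?_
      rintro v ⟨φ₁, ψ₁, h0, hfe, rfl⟩
      exact_mod_cast hweak φ₁ ψ₁ h0 hfe
  -- primal supremum value
  have hsSup : sSup {v : EReal |
      ∃ μ : Measure (Fin Nξ → ℝ), IsProbabilityMeasure μ ∧ μ Ξᶜ = 0 ∧
        (∀ s, (∫ ξ, g ξ s ∂μ) ≤ c s) ∧ v = ((∫ ξ, f ξ ∂μ : ℝ) : EReal)} = (P : EReal) := by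
    set Pr : Set EReal := {v : EReal |
      ∃ μ : Measure (Fin Nξ → ℝ), IsProbabilityMeasure μ ∧ μ Ξᶜ = 0 ∧
        (∀ s, (∫ ξ, g ξ s ∂μ) ≤ c s) ∧ v = ((∫ ξ, f ξ ∂μ : ℝ) : EReal)} with hPrdef
    have hub : ∀ v ∈ Pr, v ≤ (P : EReal) := by
      intro v hv
      obtain ⟨y, hyY, rfl⟩ := hprimY v hv
      exact_mod_cast le_csSup hYbdd hyY
    have happ : ∀ ε > (0 : ℝ), ((P - ε : ℝ) : EReal) ≤ sSup Pr := by
      intro ε hε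
      obtain ⟨x', y', h1, h2, h3⟩ := hper ε hε
      refine le_trans ?_ (le_sSup (hdisc x' y' h1 h2))
      exact_mod_cast h3
    apply le_antisymm (sSup_le hub)
    by_contra hlt
    push_neg at hlt
    have hnetop : sSup Pr ≠ ⊤ := fun h => absurd (h ▸ hlt) (by simp)
    have hnebot : sSup Pr ≠ ⊥ := by
      intro h
      have := happ 1 one_pos
      rw [h] at this
      exact (EReal.coe_ne_bot _) (le_bot_iff.1 this)
    set r : ℝ := (sSup Pr).toReal with hrdef
    have hre : ((r : ℝ) : EReal) = sSup Pr := EReal.coe_toReal hnetop hnebot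
    have hPr : P ≤ r := by
      refine le_of_forall_pos_le_add fun ε hε => ?_
      have := happ ε hε
      rw [← hre] at this
      have h' : P - ε ≤ r := by exact_mod_cast this
      linarith
    rw [← hre] at hlt
    have : (P : EReal) ≤ ((r : ℝ) : EReal) := by exact_mod_cast hPr
    exact absurd (lt_of_le_of_lt this hlt) (lt_irrefl _)
  refine ⟨by rw [hsSup, hsInf], φ, ψ, hψ0, hfeas, ?_⟩
  rw [hsInf]
  exact_mod_cast hvalreal
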